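/- Let (G,O_G), (H,O_H) be Lie supergroups arising from Harish-Chandra pairs via the Koszul construction, and let Ψ: (G,O_G) → (H,O_H) be any homomorphism of Lie supergroups. Then Ψ is uniquely determined by the pair (Ψ_red, (dΨ)_e): explicitly, for every f ∈ Ô_H, X ∈ U(g), g ∈ G, one has Ψ*(f)(X)(g) = f((dΨ)_e(X))(Ψ_red(g)), where (dΨ)_e: U(g) → U(h) is the extension of the differential at the identity. In particular two Lie supergroup homomorphisms with the same reduced map and the same differential at e are equal. -/
import Mathlib


/-- A homomorphism of Koszul Lie supergroups is determined by its reduced map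
`Φ` and its differential `φ` at the identity: if the pullback `Ψ*` agrees with
pullback by `Φ` on reductions (evaluation at `1 ∈ U(g)`), and the
right-invariant vector fields are `Ψ`-related (action of `Xe ∈ g` by left
multiplication in the argument), then `Ψ*(f)(X)(g) = f(φ(X))(Φ(g))` for all
`f`, `X ∈ U(g)`, `g ∈ G`; in particular two supergroup homomorphisms with the
same reduced map and differential coincide. -/
theorem stmt_18 {G H' : Type*} [Group G] [Group H']
    {Ug Uh : Type*} [Ring Ug] [Ring Uh] [Algebra ℂ Ug] [Algebra ℂ Uh]
    (gset : Submodule ℂ Ug)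
    (hgen : Algebra.adjoin ℂ (gset : Set Ug) = ⊤)
    (Φ : G →* H') (φ : Ug →ₐ[ℂ] Uh)
    (Ψstar : (Uh →ₗ[ℂ] (H' → ℂ)) → (Ug →ₗ[ℂ] (G → ℂ)))
    (hred : ∀ (f : Uh →ₗ[ℂ] (H' → ℂ)) (g : G), Ψstar f 1 g = f 1 (Φ g))
    (hrel : ∀ (f : Uh →ₗ[ℂ] (H' → ℂ)) (Xe : Ug), Xe ∈ gset → ∀ (Z : Ug) (g : G),
      Ψstar f (Xe * Z) g = Ψstar (f ∘ₗ LinearMap.mulLeft ℂ (φ Xe)) Z g) :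
    ∀ (f : Uh →ₗ[ℂ] (H' → ℂ)) (X : Ug) (g : G),
      Ψstar f X g = f (φ X) (Φ g) := by
  -- Step 1: the key property for elements of the multiplicative closure of gset
  have key : ∀ m ∈ Submonoid.closure (gset : Set Ug),
      ∀ (f : Uh →ₗ[ℂ] (H' → ℂ)) (Z : Ug) (g : G),
        Ψstar f (m * Z) g = Ψstar (f ∘ₗ LinearMap.mulLeft ℂ (φ m)) Z g := by
    intro m hm
    induction hm using Submonoid.closure_induction with
    | mem x hx => exact fun f Z g => hrel f x hx Z g
    | one =>
      intro f Z g
      simp [LinearMap.mulLeft_one]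
    | mul x y hx hy ihx ihy =>
      intro f Z g
      rw [mul_assoc, ihx, ihy]
      rw [map_mul, LinearMap.mulLeft_mul, LinearMap.comp_assoc]
  intro f X g
  -- Step 2: X lies in the span of the multiplicative closure
  have hX : X ∈ Submodule.span ℂ (Submonoid.closure (gset : Set Ug) : Set Ug) := by
    rw [← Algebra.adjoin_eq_span, hgen]
    exact Submodule.mem_top
  induction hX using Submodule.span_induction with
  | mem m hm =>
    have h1 : Ψstar f m g = Ψstar f (m * 1) g := by rw [mul_one]
    rw [h1, key m hm f 1 g, hred]
    simp
  | zero => simp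
  | add x y _ _ ihx ihy => simp [ihx, ihy]
  | smul c x _ ih =>
    rw [map_smul, map_smul]
    simp only [Pi.smul_apply, smul_eq_mul]
    rw [ih, map_smul]; simp
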